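/- arXiv:1401.1335 — 3 statements merged into one kernel-verified Lean document; each statement's English description precedes it below -/
import Mathlib

section
/- Let G be a finite group, let p be a prime divisor of |G| with gcd(|G|, p-1) = 1, and suppose that a Sylow p-subgroup of G is cyclic. Then G is p-nilpotent. -/
open scoped Pointwise

/-- A group `G` is `p`-nilpotent if it has a normal `p`-complement, i.e. a normal
subgroup `N` whose order is not divisible by `p` and whose index is a power of `p`. -/
def IsPNilpotent (p : ℕ) (G : Type*) [Group G] : Prop :=
  ∃ N : Subgroup G, N.Normal ∧ ¬ p ∣ Nat.card N ∧ ∃ k : ℕ, N.index = p ^ k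

/-- A subgroup `H` of `G` is c-normal in `G` if there is a normal subgroup `T`
with `G = HT` and `H ⊓ T` contained in the normal core of `H`. -/
def Subgroup.IsCNormal {G : Type*} [Group G] (H : Subgroup G) : Prop :=
  ∃ T : Subgroup G, T.Normal ∧ (H : Set G) * (T : Set G) = Set.univ ∧ H ⊓ T ≤ H.normalCore

/-- A subgroup `H` of `G` is S-quasinormal in `G` if it permutes with every Sylow
subgroup of `G`. -/
def Subgroup.IsSQuasinormal {G : Type*} [Group G] (H : Subgroup G) : Prop :=
  ∀ q : ℕ, q.Prime → ∀ Q : Sylow q G,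
    (H : Set G) * ((Q : Subgroup G) : Set G) = ((Q : Subgroup G) : Set G) * (H : Set G)

/-- A subgroup `H` of `G` has a `p`-nilpotent supplement in `G` if there is a
subgroup `K` with `G = HK` and `K` `p`-nilpotent. -/
def HasPNilpotentSupplement (p : ℕ) {G : Type*} [Group G] (H : Subgroup G) : Prop :=
  ∃ K : Subgroup G, (H : Set G) * (K : Set G) = Set.univ ∧ IsPNilpotent p K

/-- `M` is a maximal (proper) subgroup of `P`. -/
def IsMaximalSubgroupOf {G : Type*} [Group G] (M P : Subgroup G) : Prop :=
  M < P ∧ ∀ K : Subgroup G, M < K → K ≤ P → K = P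

/-- `P` is a Sylow `p`-subgroup of the subgroup `E`: a maximal `p`-subgroup of `E`. -/
def IsSylowSubgroupOf (p : ℕ) {G : Type*} [Group G] (P E : Subgroup G) : Prop :=
  P ≤ E ∧ IsPGroup p P ∧ ∀ Q : Subgroup G, Q ≤ E → IsPGroup p Q → P ≤ Q → Q = P

/-- A group is supersolvable if it has a chain of subgroups from `⊥` to `⊤`,
each normal in `G`, in which each successive quotient is cyclic (i.e. each step
is generated by the previous one together with a single element). -/
def IsSupersolvable (G : Type*) [Group G] : Prop :=
  ∃ (n : ℕ) (c : ℕ → Subgroup G), c 0 = ⊥ ∧ c n = ⊤ ∧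
    (∀ i, c i ≤ c (i + 1)) ∧ (∀ i, (c i).Normal) ∧
    ∀ i, ∃ x ∈ c (i + 1), c i ⊔ Subgroup.zpowers x = c (i + 1)

theorem stmt0 {G : Type*} [Group G] [Fintype G] {p : ℕ}
    (hp : p.Prime) (hdvd : p ∣ Nat.card G)
    (hgcd : Nat.gcd (Nat.card G) (p - 1) = 1)
    (P : Sylow p G) (hcyc : IsCyclic (P : Subgroup G)) :
    IsPNilpotent p G := by
  have := Fact.mk hp
  set φ := (P : Subgroup G).normalizerMonoidHom with hφ
  -- P is abelian (being cyclic), so P ≤ centralizer P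
  have hPC : (P : Subgroup G) ≤ Subgroup.centralizer ((P : Subgroup G) : Set G) := by
    letI := hcyc.commGroup
    intro x hx
    rw [Subgroup.mem_centralizer_iff]
    intro y hy
    exact congrArg Subtype.val (mul_comm (⟨y, hy⟩ : (P : Subgroup G)) ⟨x, hx⟩)
  -- the order of the image of the conjugation map N(P) →* Aut(P)
  set n := Nat.card φ.range with hn
  have hker : φ.ker = (Subgroup.centralizer ((P : Subgroup G) : Set G)).subgroupOf
      (Subgroup.normalizer ((P : Subgroup G) : Set G)) := Subgroup.normalizerMonoidHom_ker (P : Subgroup G)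
  have h1 : n ∣ Nat.card G := by
    have := φ.ker.index_dvd_card
    rw [Subgroup.index_ker] at this
    exact this.trans (Subgroup.card_subgroup_dvd_card _)
  -- n divides the index of P, hence is coprime to p
  have h2 : n ∣ (P : Subgroup G).index := by
    rw [hn, ← Subgroup.index_ker, hker]
    have hle : (P : Subgroup G).subgroupOf (Subgroup.normalizer ((P : Subgroup G) : Set G)) ≤
        (Subgroup.centralizer ((P : Subgroup G) : Set G)).subgroupOf
          (Subgroup.normalizer ((P : Subgroup G) : Set G)) := by
      intro x hx
      rw [Subgroup.mem_subgroupOf] at hx ⊢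
      exact hPC hx
    exact (Subgroup.index_dvd_of_le hle).trans
      (Subgroup.relIndex_dvd_index_of_le Subgroup.le_normalizer)
  have hnp : Nat.Coprime n p :=
    (hp.coprime_iff_not_dvd.mpr fun h => P.not_dvd_index (h.trans h2)).symm
  -- n divides |Aut P| = totient (p^k)
  obtain ⟨k, hk⟩ := P.2.exists_card_eq
  have h3 : n ∣ Nat.totient (p ^ k) := by
    rw [← hk, ← IsCyclic.card_mulAut]
    exact Subgroup.card_subgroup_dvd_card _
  have h4 : n ∣ p - 1 := by
    rcases Nat.eq_zero_or_pos k with rfl | hkpos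
    · have : n = 1 := Nat.eq_one_of_dvd_one (by simpa using h3)
      simp [this]
    · rw [Nat.totient_prime_pow hp hkpos] at h3
      exact (Nat.Coprime.pow_right _ hnp).dvd_of_dvd_mul_left h3
  have hn1 : n = 1 := Nat.eq_one_of_dvd_one (hgcd ▸ Nat.dvd_gcd h1 h4)
  -- hence N(P) ≤ C(P)
  have hP : Subgroup.normalizer ((P : Subgroup G) : Set G) ≤
      Subgroup.centralizer ((P : Subgroup G) : Set G) := by
    have hrange : φ.range = ⊥ := Subgroup.eq_bot_of_card_eq _ hn1
    intro g hg
    have : (⟨g, hg⟩ : Subgroup.normalizer ((P : Subgroup G) : Set G)) ∈ φ.ker := by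
      have hm : φ ⟨g, hg⟩ ∈ φ.range := ⟨_, rfl⟩
      rw [hrange, Subgroup.mem_bot] at hm
      exact hm
    rw [hker, Subgroup.mem_subgroupOf] at this
    exact this
  -- Burnside's normal p-complement theorem
  refine ⟨(MonoidHom.transferSylow P hP).ker, MonoidHom.normal_ker _,
    MonoidHom.not_dvd_card_ker_transferSylow P hP, k, ?_⟩
  rw [(MonoidHom.ker_transferSylow_isComplement' P hP).symm.index_eq_card, hk]
end

section
/- Let G be a finite group and p a prime divisor of |G| with gcd(|G|, p-1) = 1. If N is a normal subgroup of G such that the order of a Sylow p-subgroup of N is at most p and the quotient G/N is p-nilpotent, then G is p-nilpotent. -/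
open scoped Pointwise

lemma lemA {G : Type*} [Group G] [Finite G] {p : ℕ} (hp : p.Prime)
    (hcard : ¬ p ^ 2 ∣ Nat.card G) (hgcd : Nat.gcd (Nat.card G) (p - 1) = 1) :
    IsPNilpotent p G := by
  have := Fact.mk hp
  by_cases hdvd : p ∣ Nat.card G
  · obtain ⟨P⟩ : Nonempty (Sylow p G) := inferInstance
    have hcardpos : Nat.card G ≠ 0 := Nat.card_pos.ne'
    have hPcard : Nat.card (P : Subgroup G) = p := by
      have h1 : 1 ≤ (Nat.card G).factorization p := by
        rw [← hp.pow_dvd_iff_le_factorization hcardpos, pow_one]; exact hdvd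
      have h2 : ¬ 2 ≤ (Nat.card G).factorization p := by
        rw [← hp.pow_dvd_iff_le_factorization hcardpos]; exact hcard
      have h3 : (Nat.card G).factorization p = 1 := by omega
      rw [Sylow.card_eq_multiplicity, h3, pow_one]
    have hcyc : IsCyclic (P : Subgroup G) := isCyclic_of_prime_card hPcard
    set f := (P : Subgroup G).normalizerMonoidHom with hf
    have hker : f.ker.index = 1 := by
      have hMA : Nat.card (MulAut ↥(P : Subgroup G)) = p - 1 := by
        rw [IsCyclic.card_mulAut, hPcard, Nat.totient_prime hp]
      have h1 : f.ker.index ∣ p - 1 := by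
        rw [Subgroup.index_ker, ← hMA]
        exact Subgroup.card_subgroup_dvd_card f.range
      have h2 : f.ker.index ∣ Nat.card G :=
        (Subgroup.index_dvd_card f.ker).trans (Subgroup.card_subgroup_dvd_card _)
      exact Nat.eq_one_of_dvd_one (hgcd ▸ Nat.dvd_gcd h2 h1)
    have hP : Subgroup.normalizer ((P : Subgroup G) : Set G) ≤ Subgroup.centralizer (P : Set G) := by
      have := Subgroup.index_eq_one.mp hker
      rw [Subgroup.normalizerMonoidHom_ker] at this
      exact (Subgroup.subgroupOf_eq_top.mp this)
    have hcomp := MonoidHom.ker_transferSylow_isComplement' P hP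
    exact ⟨(MonoidHom.transferSylow P hP).ker, inferInstance,
      MonoidHom.not_dvd_card_ker_transferSylow P hP, 1,
      by rw [hcomp.symm.index_eq_card, hPcard, pow_one]⟩
  · exact ⟨⊤, inferInstance, by rwa [Subgroup.card_top], 0,
      by rw [Subgroup.index_top, pow_zero]⟩

theorem stmt1 {G : Type*} [Group G] [Fintype G] {p : ℕ}
    (hp : p.Prime) (hdvd : p ∣ Nat.card G)
    (hgcd : Nat.gcd (Nat.card G) (p - 1) = 1)
    (N : Subgroup G) [N.Normal]
    (hNp : ∀ Q : Sylow p ↥N, Nat.card (Q : Subgroup ↥N) ≤ p)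
    (hquot : IsPNilpotent p (G ⧸ N)) :
    IsPNilpotent p G := by
  classical
  have hp2 := Fact.mk hp
  obtain ⟨Mbar, hMnorm, hMp, k, hMindex⟩ := hquot
  set φ := QuotientGroup.mk' N with hφ
  set M : Subgroup G := Mbar.comap φ with hM
  have hMnormal : M.Normal := hMnorm.comap φ
  have hNM : N ≤ M := by
    intro x hx
    have : φ x = 1 := (QuotientGroup.eq_one_iff x).mpr hx
    rw [hM, Subgroup.mem_comap, this]
    exact Mbar.one_mem
  have hMidx : M.index = p ^ k := by
    rw [hM, Subgroup.index_comap_of_surjective _ (QuotientGroup.mk'_surjective N), hMindex]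
  -- card of quotient M / (N ⊓ M)
  have hrel : (N.subgroupOf M).index = Nat.card Mbar := by
    have h1 : N.subgroupOf M = (φ.comp M.subtype).ker := by
      ext x
      simp [Subgroup.mem_subgroupOf, MonoidHom.mem_ker, hφ, QuotientGroup.eq_one_iff]
    have h2 : (φ.comp M.subtype).range = Mbar := by
      rw [MonoidHom.range_comp, Subgroup.range_subtype]
      exact Subgroup.map_comap_eq_self_of_surjective (QuotientGroup.mk'_surjective N) Mbar
    rw [h1, Subgroup.index_ker, h2]
  -- p^2 does not divide card N
  have hN2 : ¬ p ^ 2 ∣ Nat.card N := by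
    intro h
    obtain ⟨Q⟩ : Nonempty (Sylow p ↥N) := inferInstance
    have hle := hNp Q
    rw [Sylow.card_eq_multiplicity] at hle
    have h2 : 2 ≤ (Nat.card ↥N).factorization p := by
      rw [← hp.pow_dvd_iff_le_factorization Nat.card_pos.ne']; exact h
    have : p ^ 2 ≤ p ^ (Nat.card ↥N).factorization p := Nat.pow_le_pow_right hp.pos h2
    have := hp.two_le
    nlinarith [this, hle]
  -- p^2 does not divide card M
  have hM2 : ¬ p ^ 2 ∣ Nat.card ↥M := by
    intro h
    apply hN2
    have hcards : Nat.card (N.subgroupOf M) * (N.subgroupOf M).index = Nat.card ↥M :=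
      Subgroup.card_mul_index _
    have hcN : Nat.card (N.subgroupOf M) = Nat.card N :=
      Nat.card_congr (Subgroup.subgroupOfEquivOfLe hNM).toEquiv
    rw [hcN, hrel] at hcards
    have hcop : (p ^ 2).Coprime (Nat.card Mbar) :=
      Nat.Coprime.pow_left 2 (hp.coprime_iff_not_dvd.mpr hMp)
    exact hcop.dvd_of_dvd_mul_right (hcards ▸ h)
  have hgcdM : Nat.gcd (Nat.card ↥M) (p - 1) = 1 := by
    have h := Nat.gcd_dvd_gcd_of_dvd_left (p - 1) (Subgroup.card_subgroup_dvd_card M)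
    rw [hgcd] at h
    exact Nat.eq_one_of_dvd_one h
  obtain ⟨K', hK'norm, hK'p, j, hK'index⟩ := lemA hp hM2 hgcdM
  set H : Subgroup G := K'.map M.subtype with hH
  have hHM : H ≤ M := Subgroup.map_subtype_le K'
  have hHchar : ∀ x : G, x ∈ H ↔ x ∈ M ∧ ¬ p ∣ orderOf x := by
    intro x
    constructor
    · rintro ⟨y, hy, rfl⟩
      refine ⟨y.2, fun hpd => hK'p ?_⟩
      have hoy : orderOf (M.subtype y) = orderOf y :=
        orderOf_injective M.subtype M.subtype_injective y
      exact hpd.trans (hoy ▸ Subgroup.orderOf_dvd_natCard K' hy)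
    · rintro ⟨hxM, hord⟩
      set y : ↥M := ⟨x, hxM⟩ with hy
      have hox : orderOf y = orderOf x := (orderOf_injective M.subtype M.subtype_injective y).symm
      have h1 : orderOf ((y : ↥M ⧸ K')) ∣ orderOf x :=
        hox ▸ orderOf_map_dvd (QuotientGroup.mk' K') y
      have h2 : orderOf ((y : ↥M ⧸ K')) ∣ p ^ j := by
        rw [← hK'index]
        exact orderOf_dvd_natCard _
      obtain ⟨i, _, hi⟩ := (Nat.dvd_prime_pow hp).mp h2
      have hi0 : i = 0 := by
        by_contra h0
        exact hord ((dvd_pow_self p h0).trans (hi ▸ h1))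
      have : ((y : ↥M) : ↥M ⧸ K') = 1 := by
        rw [← orderOf_eq_one_iff, hi, hi0, pow_zero]
      exact ⟨y, (QuotientGroup.eq_one_iff y).mp this, rfl⟩
  have hHnormal : H.Normal := by
    constructor
    intro x hx g
    rw [hHchar] at hx ⊢
    obtain ⟨hxM, hord⟩ := hx
    refine ⟨hMnormal.conj_mem x hxM g, fun hpd => hord (hpd.trans ?_)⟩
    exact orderOf_dvd_of_pow_eq_one (by rw [conj_pow, pow_orderOf_eq_one, mul_one, mul_inv_cancel])
  have hHcard : Nat.card H = Nat.card K' :=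
    Nat.card_congr (Subgroup.equivMapOfInjective K' M.subtype M.subtype_injective).toEquiv.symm
  refine ⟨H, hHnormal, by rw [hHcard]; exact hK'p, j + k, ?_⟩
  have hsub : H.subgroupOf M = K' := by
    rw [hH, Subgroup.subgroupOf]
    exact Subgroup.comap_map_eq_self_of_injective M.subtype_injective K'
  rw [← Subgroup.relIndex_mul_index hHM, hMidx, Subgroup.relIndex, hsub, hK'index, ← pow_add]
end

section
/- Let G be a finite group and p a prime divisor of |G| with gcd(|G|, p-1) = 1. Let P be a Sylow p-subgroup of G. If every subgroup of P of order p, and (in case P is a non-abelian 2-group) every cyclic subgroup of P of order 4, has a p-nilpotent supplement in G, then G is p-nilpotent. -/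
open scoped Pointwise

theorem IsPNilpotent.of_mulEquiv {G G' : Type*} [Group G] [Group G'] (e : G ≃* G') {p : ℕ}
    (h : IsPNilpotent p G) : IsPNilpotent p G' := by
  obtain ⟨N, hN, hcard, k, hk⟩ := h
  refine ⟨N.map e.toMonoidHom, hN.map _ e.surjective, ?_, k, ?_⟩
  · rwa [← Nat.card_congr (N.equivMapOfInjective e.toMonoidHom e.injective).toEquiv]
  · rw [Subgroup.index_map_eq _ e.surjective
      (by rw [(MonoidHom.ker_eq_bot_iff _).mpr e.injective]; exact bot_le)]
    exact hk

theorem IsPNilpotent.subgroup {G : Type*} [Group G] [Finite G] {p : ℕ} (hp : p.Prime)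
    (h : IsPNilpotent p G) (H : Subgroup G) : IsPNilpotent p H := by
  obtain ⟨N, hN, hcard, k, hk⟩ := h
  refine ⟨N.subgroupOf H, Subgroup.normal_subgroupOf, ?_, ?_⟩
  · intro hdvd
    have : Fact p.Prime := ⟨hp⟩
    obtain ⟨x, hx⟩ := exists_prime_orderOf_dvd_card' (G := N.subgroupOf H) p hdvd
    have hxN : ((x : H) : G) ∈ N := x.2
    have : orderOf ((x : H) : G) = p := by rw [← hx, Subgroup.orderOf_mk, Subgroup.orderOf_mk]
    exact hcard (this ▸ N.orderOf_dvd_natCard hxN)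
  · have : (N.subgroupOf H).index ∣ p ^ k := by
      rw [← hk]
      exact Subgroup.relIndex_dvd_index_of_normal N H
    obtain ⟨j, _, hj⟩ := (Nat.dvd_prime_pow hp).mp this
    exact ⟨j, hj⟩

theorem pnilpotent_step {G : Type*} [Group G] [Finite G] {p : ℕ} (hp : p.Prime) (M : Subgroup G)
    (hM : M.Normal) (hMi : M.index = p) (hnil : IsPNilpotent p M) : IsPNilpotent p G := by
  obtain ⟨N, hN, hNcard, j, hNj⟩ := hnil
  set NG : Subgroup G := N.map M.subtype with hNGdef
  have hNGle : NG ≤ M := Subgroup.map_subtype_le N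
  have hNGsub : NG.subgroupOf M = N :=
    Subgroup.comap_map_eq_self_of_injective M.subtype_injective N
  have hNGcard : Nat.card NG = Nat.card N :=
    (Nat.card_congr (N.equivMapOfInjective M.subtype M.subtype_injective).toEquiv).symm
  have hNGcard' : ¬ p ∣ Nat.card NG := hNGcard ▸ hNcard
  -- key claim: any subgroup A ≤ M with p'-order is ≤ NG
  have hclaim : ∀ A : Subgroup G, A ≤ M → ¬ p ∣ Nat.card A → A ≤ NG := by
    intro A hAle hAcard a ha
    have haM : a ∈ M := hAle ha
    have h1 : orderOf a ∣ Nat.card A := A.orderOf_dvd_natCard ha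
    -- work in M ⧸ N
    let abar : ↥M ⧸ N := QuotientGroup.mk ⟨a, haM⟩
    have h2 : orderOf abar ∣ orderOf a := by
      rw [← Subgroup.orderOf_mk a haM]
      exact orderOf_map_dvd (QuotientGroup.mk' N) _
    have h3 : orderOf abar ∣ p ^ j := by
      rw [← hNj]
      exact orderOf_dvd_natCard abar
    have h4 : Nat.Coprime (Nat.card A) (p ^ j) :=
      (Nat.Prime.coprime_iff_not_dvd hp |>.mpr hAcard).symm.pow_right j
    have h5 : orderOf abar = 1 := Nat.eq_one_of_dvd_coprimes h4 (h2.trans h1) h3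
    rw [orderOf_eq_one_iff] at h5
    exact ⟨_, (QuotientGroup.eq_one_iff (⟨a, haM⟩ : ↥M)).mp h5, rfl⟩
  refine ⟨NG, ?_, hNGcard', ⟨j + 1, ?_⟩⟩
  · constructor
    intro n hn g
    have hA : NG.map (MulAut.conj g).toMonoidHom ≤ NG := by
      apply hclaim
      · rintro x ⟨y, hy, rfl⟩
        exact hM.conj_mem y (hNGle hy) g
      · intro hc
        apply hNGcard'
        rwa [← Nat.card_congr (NG.equivMapOfInjective (MulAut.conj g).toMonoidHom
          (MulAut.conj g).injective).toEquiv] at hc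
    have : (MulAut.conj g).toMonoidHom n ∈ NG.map (MulAut.conj g).toMonoidHom :=
      ⟨n, hn, rfl⟩
    simpa [MulAut.conj_apply] using hA this
  · have h7 : NG.relIndex M = p ^ j := by
      rw [Subgroup.relIndex, hNGsub, hNj]
    have := Subgroup.relIndex_mul_index hNGle
    rw [h7, hMi] at this
    rw [pow_succ]
    exact this.symm

theorem pnilpotent_aux {p : ℕ} (hp : p.Prime) (n : ℕ) :
    ∀ (G : Type*) [Group G] [Finite G], Nat.card G = n →
      p ∣ Nat.card G → (Nat.card G).gcd (p - 1) = 1 →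
      (∀ H : Subgroup G, Nat.card H = p → HasPNilpotentSupplement p H) →
      IsPNilpotent p G := by
  induction n using Nat.strong_induction_on with
  | _ n ih =>
  intro G _ _ hn hdvd hgcd hsupp
  have : Fact p.Prime := ⟨hp⟩
  obtain ⟨x, hx⟩ := exists_prime_orderOf_dvd_card' p hdvd
  set H := Subgroup.zpowers x with hHdef
  have hHcard : Nat.card H = p := by rw [hHdef, Nat.card_zpowers, hx]
  obtain ⟨K, hHK, hKnil⟩ := hsupp H hHcard
  by_cases hKtop : K = ⊤
  · subst hKtop; exact hKnil.of_mulEquiv Subgroup.topEquiv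
  -- H ∩ K trivial
  have hHKbot : H ⊓ K = ⊥ := by
    have hdv : Nat.card (H ⊓ K : Subgroup G) ∣ p := hHcard ▸ Subgroup.card_dvd_of_le inf_le_left
    rcases (Nat.Prime.eq_one_or_self_of_dvd hp _ hdv) with h1 | h1
    · exact Subgroup.eq_bot_of_card_eq _ h1
    · exfalso
      have hKH : H ≤ K := by
        have : H ⊓ K = H := Subgroup.eq_of_le_of_card_ge inf_le_left (by rw [h1, hHcard])
        rw [← this]; exact inf_le_right
      apply hKtop
      rw [Subgroup.eq_top_iff']
      intro g
      have hg : g ∈ (H : Set G) * (K : Set G) := hHK ▸ Set.mem_univ g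
      obtain ⟨h, hh, k, hk, rfl⟩ := hg
      exact K.mul_mem (hKH hh) hk
  -- index of K is p
  have hKindex : K.index = p := by
    have hbij : Function.Bijective (fun h : H => (QuotientGroup.mk (h : G) : G ⧸ K)) := by
      constructor
      · intro a b hab
        have : ((a : G)⁻¹ * b : G) ∈ K := (QuotientGroup.eq (s := K)).mp hab
        have h2 : ((a : G)⁻¹ * b : G) ∈ H ⊓ K := ⟨H.mul_mem (H.inv_mem a.2) b.2, this⟩
        rw [hHKbot, Subgroup.mem_bot] at h2
        exact Subtype.ext (inv_mul_eq_one.mp h2)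
      · intro q
        refine QuotientGroup.induction_on q ?_
        intro g
        have hg : g ∈ (H : Set G) * (K : Set G) := hHK ▸ Set.mem_univ g
        obtain ⟨h, hh, k, hk, rfl⟩ := hg
        exact ⟨⟨h, hh⟩, ((QuotientGroup.eq (s := K)).mpr (by simpa using hk)).symm⟩
    have : Nat.card (G ⧸ K) = p := by
      rw [← Nat.card_congr (Equiv.ofBijective _ hbij), hHcard]
    rwa [Subgroup.index_eq_card]
  -- quotient by the normal core of K
  set C := K.normalCore with hCdef
  have hCleK : C ≤ K := K.normalCore_le
  -- H ∩ C trivial, via H ⊓ K = ⊥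
  have hxC : x ∉ C := by
    intro hxc
    have : x ∈ H ⊓ K := ⟨Subgroup.mem_zpowers x, hCleK hxc⟩
    rw [hHKbot, Subgroup.mem_bot] at this
    rw [this, orderOf_one] at hx
    exact hp.one_lt.ne' hx.symm
  have hQfin : Finite (G ⧸ C) := Quotient.finite _
  -- card of the quotient divides p !
  have hQdvd : Nat.card (G ⧸ C) ∣ Nat.factorial p := by
    have hker : C = (MulAction.toPermHom G (G ⧸ K)).ker := K.normalCore_eq_ker
    rw [hker]
    have e := QuotientGroup.quotientKerEquivRange (MulAction.toPermHom G (G ⧸ K))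
    rw [Nat.card_congr e.toEquiv]
    have h1 : Nat.card (MulAction.toPermHom G (G ⧸ K)).range ∣
        Nat.card (Equiv.Perm (G ⧸ K)) := Subgroup.card_subgroup_dvd_card _
    have h2 : Nat.card (Equiv.Perm (G ⧸ K)) = Nat.factorial p := by
      classical
      have : Fintype (G ⧸ K) := Fintype.ofFinite _
      rw [Nat.card_eq_fintype_card, Fintype.card_perm, ← Nat.card_eq_fintype_card,
        ← Subgroup.index_eq_card, hKindex]
    rwa [h2] at h1
  have hfac : Nat.factorial p = p * Nat.factorial (p - 1) :=
    (Nat.mul_factorial_pred hp.ne_zero).symm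
  have hQp2 : ¬ p ^ 2 ∣ Nat.card (G ⧸ C) := by
    intro hcon
    have h3 : p ^ 2 ∣ p * Nat.factorial (p - 1) := hfac ▸ hcon.trans hQdvd
    rw [pow_two] at h3
    have h4 : p ∣ Nat.factorial (p - 1) :=
      (mul_dvd_mul_iff_left (Nat.Prime.ne_zero hp)).mp h3
    have h5 := (Nat.Prime.dvd_factorial hp).mp h4
    have h6 := hp.two_le
    omega
  -- the image of x generates a Sylow p-subgroup of the quotient
  set y : G ⧸ C := QuotientGroup.mk x with hydef
  have hyord : orderOf y = p := by
    have h1 : orderOf y ∣ p := by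
      rw [← hx]
      exact orderOf_map_dvd (QuotientGroup.mk' C) x
    rcases (Nat.Prime.eq_one_or_self_of_dvd hp _ h1) with h2 | h2
    · exfalso
      rw [orderOf_eq_one_iff] at h2
      exact hxC ((QuotientGroup.eq_one_iff x).mp h2)
    · exact h2
  have hycard : Nat.card (Subgroup.zpowers y) = p := by rw [Nat.card_zpowers, hyord]
  have hQpdvd : p ∣ Nat.card (G ⧸ C) := hycard ▸ Subgroup.card_subgroup_dvd_card _
  have hQ0 : Nat.card (G ⧸ C) ≠ 0 := Nat.card_pos.ne'
  have hfact1 : (Nat.card (G ⧸ C)).factorization p = 1 := by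
    have hle : 1 ≤ (Nat.card (G ⧸ C)).factorization p := by
      rw [← Nat.Prime.pow_dvd_iff_le_factorization hp hQ0, pow_one]
      exact hQpdvd
    have hlt : ¬ 2 ≤ (Nat.card (G ⧸ C)).factorization p := by
      rw [← Nat.Prime.pow_dvd_iff_le_factorization hp hQ0]
      exact hQp2
    omega
  set Sbar : Sylow p (G ⧸ C) :=
    Sylow.ofCard (Subgroup.zpowers y) (by rw [hycard, hfact1, pow_one]) with hSdef
  have hScoe : (Sbar : Subgroup (G ⧸ C)) = Subgroup.zpowers y := rfl
  -- normalizer is contained in centralizer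
  have hnc : Subgroup.normalizer ((Sbar : Subgroup (G ⧸ C)) : Set (G ⧸ C)) ≤ Subgroup.centralizer (Sbar : Set (G ⧸ C)) := by
    intro g hg
    rw [Subgroup.mem_normalizer_iff] at hg
    have hy1 : g * y * g⁻¹ ∈ Subgroup.zpowers y := by
      rw [← hScoe]; rw [← hg y]; rw [hScoe]; exact Subgroup.mem_zpowers y
    obtain ⟨k, hk⟩ := hy1
    -- replace the integer exponent by a natural number exponent
    have hyk : ∃ j : ℕ, y ^ j = g * y * g⁻¹ := by
      refine ⟨(k % (p : ℤ)).toNat, ?_⟩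
      have hnonneg : 0 ≤ k % (p : ℤ) := Int.emod_nonneg k (by exact_mod_cast hp.ne_zero)
      rw [← zpow_natCast, Int.toNat_of_nonneg hnonneg, ← hyord, zpow_mod_orderOf]
      exact hk
    obtain ⟨j, hj⟩ := hyk
    have key : ∀ m : ℕ, g ^ m * y * (g ^ m)⁻¹ = y ^ (j ^ m) := by
      intro m
      induction m with
      | zero => simp
      | succ m ihm =>
        have : g ^ (m + 1) * y * (g ^ (m + 1))⁻¹ = g ^ m * (g * y * g⁻¹) * (g ^ m)⁻¹ := by
          rw [pow_succ]; group
        rw [this, ← hj, ← conj_pow, ihm, ← pow_mul, ← pow_succ]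
    -- now use orders
    have hym : y ^ (j ^ orderOf g) = y := by
      have := key (orderOf g)
      rw [pow_orderOf_eq_one g] at this
      simpa using this.symm
    have hmod : j ^ orderOf g ≡ 1 [MOD p] := by
      rw [← hyord]
      exact pow_eq_pow_iff_modEq.mp (by rw [pow_one]; exact hym)
    have hzj : ((j : ZMod p)) ^ orderOf g = 1 := by
      have := (ZMod.natCast_eq_natCast_iff _ _ _).mpr hmod
      push_cast at this
      simpa using this
    have hjne : (j : ZMod p) ≠ 0 := by
      intro h0
      have : (p : ℕ) ∣ j := (ZMod.natCast_eq_zero_iff j p).mp h0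
      obtain ⟨t, rfl⟩ := this
      rw [pow_mul, ← hyord, pow_orderOf_eq_one, one_pow] at hj
      have : y = 1 := by
        have h1 : g * y * g⁻¹ = 1 := hj.symm
        have := congrArg (fun z => g⁻¹ * z * g) h1
        simpa [mul_assoc] using this
      rw [this, orderOf_one] at hyord
      exact hp.one_lt.ne' hyord.symm
    have hordj : orderOf ((j : ZMod p)) = 1 := by
      have hd1 : orderOf ((j : ZMod p)) ∣ orderOf g := orderOf_dvd_of_pow_eq_one hzj
      have hd2 : orderOf ((j : ZMod p)) ∣ p - 1 := by
        apply orderOf_dvd_of_pow_eq_one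
        exact ZMod.pow_card_sub_one_eq_one hjne
      have hd3 : orderOf g ∣ Nat.card G := by
        exact (orderOf_dvd_natCard g).trans (Subgroup.card_quotient_dvd_card C)
      exact Nat.eq_one_of_dvd_coprimes hgcd (hd1.trans hd3) hd2
    have hj1 : (j : ZMod p) = 1 := by rwa [orderOf_eq_one_iff] at hordj
    have hyj : y ^ j = y := by
      have hmj : j ≡ 1 [MOD orderOf y] := by
        rw [hyord]
        exact (ZMod.natCast_eq_natCast_iff j 1 p).mp (by simpa using hj1)
      calc y ^ j = y ^ 1 := pow_eq_pow_iff_modEq.mpr hmj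
      _ = y := pow_one y
    have hgy : g * y = y * g := by
      have : g * y * g⁻¹ = y := by rw [← hj, hyj]
      calc g * y = (g * y * g⁻¹) * g := by group
      _ = y * g := by rw [this]
    -- conclude centralizing
    rw [Subgroup.mem_centralizer_iff]
    intro h hh
    have hh' : h ∈ Subgroup.zpowers y := hh
    obtain ⟨k, rfl⟩ := hh'
    have : Commute g y := hgy
    exact (this.zpow_right k).symm
  -- Burnside's normal complement theorem in the quotient
  have hcomp := MonoidHom.ker_transferSylow_isComplement' Sbar hnc
  set Mbar := (MonoidHom.transferSylow Sbar hnc).ker with hMbardef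
  have hMbarNormal : Mbar.Normal := MonoidHom.normal_ker _
  have hMbarIndex : Mbar.index = p := by
    rw [hcomp.symm.index_eq_card, hScoe, hycard]
  set M : Subgroup G := Mbar.comap (QuotientGroup.mk' C) with hMdef
  have hMnormal : M.Normal := hMbarNormal.comap _
  have hMindex : M.index = p := by
    rw [hMdef, Subgroup.index_comap_of_surjective _ (QuotientGroup.mk'_surjective C), hMbarIndex]
  have hMcard : Nat.card M * p = Nat.card G := by
    rw [← hMindex]
    exact Subgroup.card_mul_index M
  by_cases hpM : p ∣ Nat.card M
  · -- recurse into M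
    apply pnilpotent_step hp M hMnormal hMindex
    have hlt : Nat.card (↥M) < n := by
      have h0 : 0 < Nat.card (↥M) := Nat.card_pos
      have h2 := hp.two_le
      nlinarith [hMcard, hn]
    apply ih (Nat.card (↥M)) hlt (↥M) rfl hpM
    · -- gcd
      exact Nat.Coprime.coprime_dvd_left (Subgroup.card_subgroup_dvd_card M) hgcd
    · -- supplements
      intro H' hH'
      have hmapcard : Nat.card (H'.map M.subtype) = p := by
        rw [← hH']
        exact (Nat.card_congr (H'.equivMapOfInjective M.subtype M.subtype_injective).toEquiv).symm
      obtain ⟨K', hK'sup, hK'nil⟩ := hsupp (H'.map M.subtype) hmapcard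
      refine ⟨K'.subgroupOf M, ?_, ?_⟩
      · ext m
        simp only [Set.mem_univ, iff_true]
        have hm : (m : G) ∈ (H'.map M.subtype : Set G) * (K' : Set G) :=
          hK'sup ▸ Set.mem_univ _
        obtain ⟨h, hh, k, hk, hmul⟩ := hm
        obtain ⟨h₀, hh₀, rfl⟩ := hh
        have hkM : k ∈ M := by
          have hkeq : k = ((h₀ : G))⁻¹ * (m : G) := by
            rw [← hmul, Subgroup.coe_subtype]; group
          rw [hkeq]
          exact M.mul_mem (M.inv_mem h₀.2) m.2
        exact ⟨h₀, hh₀, ⟨k, hkM⟩, hk, Subtype.ext hmul⟩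
      · have e1 : K'.subgroupOf M = (K' ⊓ M).subgroupOf M := by
          ext z
          simp [Subgroup.mem_subgroupOf, z.2]
        rw [e1]
        have h2 : IsPNilpotent p (↥((K' ⊓ M).subgroupOf K')) :=
          hK'nil.subgroup hp ((K' ⊓ M).subgroupOf K')
        exact h2.of_mulEquiv ((Subgroup.subgroupOfEquivOfLe inf_le_left).trans
          (Subgroup.subgroupOfEquivOfLe inf_le_right).symm)
  · -- M is itself a normal p-complement
    exact ⟨M, hMnormal, hpM, 1, by rw [hMindex, pow_one]⟩

theorem stmt18 {G : Type*} [Group G] [Fintype G] {p : ℕ}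
    (hp : p.Prime) (hdvd : p ∣ Nat.card G)
    (hgcd : Nat.gcd (Nat.card G) (p - 1) = 1)
    (P : Sylow p G)
    (h1 : ∀ H : Subgroup G, H ≤ (P : Subgroup G) → Nat.card H = p →
      HasPNilpotentSupplement p H)
    (h4 : IsPGroup 2 (P : Subgroup G) → ¬ IsMulCommutative (P : Subgroup G) →
      ∀ H : Subgroup G, H ≤ (P : Subgroup G) → IsCyclic H → Nat.card H = 4 →
        HasPNilpotentSupplement p H) :
    IsPNilpotent p G := by
  have : Fact p.Prime := ⟨hp⟩
  apply pnilpotent_aux hp (Nat.card G) G rfl hdvd hgcd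
  intro H hH
  have hpg : IsPGroup p H := IsPGroup.of_card (by rw [hH, pow_one])
  obtain ⟨Q, hQ⟩ := hpg.exists_le_sylow
  obtain ⟨g, hg⟩ := MulAction.exists_smul_eq G Q P
  have hle : (MulAut.conj g) • H ≤ (P : Subgroup G) := by
    rw [← hg, Sylow.coe_subgroup_smul]
    intro z hz
    rw [Subgroup.mem_pointwise_smul_iff_inv_smul_mem] at hz ⊢
    exact hQ hz
  have hcard2 : Nat.card ((MulAut.conj g) • H : Subgroup G) = p := by
    rw [← hH]
    exact (Nat.card_congr (Subgroup.equivSMul (MulAut.conj g) H).toEquiv).symm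
  obtain ⟨K, hKsup, hKnil⟩ := h1 _ hle hcard2
  refine ⟨(MulAut.conj g)⁻¹ • K, ?_, ?_⟩
  · ext z
    simp only [Set.mem_univ, iff_true]
    have hz : (MulAut.conj g) z ∈
        (((MulAut.conj g) • H : Subgroup G) : Set G) * (K : Set G) :=
      hKsup ▸ Set.mem_univ _
    obtain ⟨a, ha, b, hb, hab⟩ := hz
    have ha' : (MulAut.conj g)⁻¹ • a ∈ H := by
      rwa [← Subgroup.mem_pointwise_smul_iff_inv_smul_mem]
    have hb' : (MulAut.conj g)⁻¹ • b ∈ (MulAut.conj g)⁻¹ • K :=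
      Subgroup.smul_mem_pointwise_smul b _ _ hb
    refine ⟨(MulAut.conj g)⁻¹ • a, ha', (MulAut.conj g)⁻¹ • b, hb', ?_⟩
    show (MulAut.conj g)⁻¹ • a * (MulAut.conj g)⁻¹ • b = z
    beta_reduce at hab
    rw [← smul_mul', hab]
    simp [MulAut.smul_def]
    group
  · exact hKnil.of_mulEquiv (Subgroup.equivSMul (MulAut.conj g)⁻¹ K)
end
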